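/- Let n ≥ 2 and C ≥ 1. Let λ_1 ≥ λ_2 ≥ ⋯ ≥ λ_n > 0 be real numbers, let Z ∈ ℂⁿ, let 0 < ε ≤ 1, and set s = Σ_i λ_i |Z_i|² + ε. Assume: (a) Σ_i λ_i^{-1} − ‖Z‖²/s ≤ C; (b) Π_i λ_i ≤ C s; (c) ‖Z‖² ≤ C. Then there is a constant C′ depending only on n and C (for instance C′ = 2 Cⁿ works) such that λ_1 ≤ C′ ( Σ_i λ_i |Z_i|² ) + C′. -/

import Mathlib

lemma stmt4_aux (q l s : ℝ) (hl : 0 < l) (hs : 0 < s) (h : l * q ≤ s) : q / s ≤ l⁻¹ := by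
  rw [div_le_iff₀ hs, inv_mul_eq_div, le_div_iff₀ hl]
  linarith [mul_comm q l]

theorem stmt4 (n : ℕ) (hn : 2 ≤ n) (C : ℝ) (hC : 1 ≤ C)
    (lam : Fin n → ℝ) (hpos : ∀ i, 0 < lam i)
    (hmono : ∀ i j : Fin n, i ≤ j → lam j ≤ lam i)
    (Z : Fin n → ℂ) (ε : ℝ) (hε : 0 < ε) (hε1 : ε ≤ 1)
    (s : ℝ) (hs : s = (∑ i, lam i * Complex.normSq (Z i)) + ε)
    (ha : (∑ i, (lam i)⁻¹) - (∑ i, Complex.normSq (Z i)) / s ≤ C)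
    (hb : ∏ i, lam i ≤ C * s)
    (hc : ∑ i, Complex.normSq (Z i) ≤ C) :
    lam ⟨0, by omega⟩ ≤ 2 * C ^ n * (∑ i, lam i * Complex.normSq (Z i)) + 2 * C ^ n := by
  have hC0 : (0:ℝ) < C := by linarith
  set i0 : Fin n := ⟨0, by omega⟩ with hi0
  set iN : Fin n := ⟨n-1, by omega⟩ with hiN
  set T : ℝ := ∑ i, lam i * Complex.normSq (Z i) with hT
  have hTnn : ∀ i, 0 ≤ lam i * Complex.normSq (Z i) :=
    fun i => mul_nonneg (hpos i).le (Complex.normSq_nonneg _)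
  have hT0 : 0 ≤ T := Finset.sum_nonneg fun i _ => hTnn i
  have hs_pos : 0 < s := by rw [hs]; linarith
  have hTs : T ≤ s := by rw [hs]; linarith
  -- each i: lam i * |Z i|² ≤ s
  have hterm : ∀ i : Fin n, lam i * Complex.normSq (Z i) ≤ s := fun i =>
    le_trans (Finset.single_le_sum (fun j _ => hTnn j) (Finset.mem_univ i)) hTs
  -- ‖Z‖²/s ≤ (lam iN)⁻¹
  have hNle : ∀ i : Fin n, lam iN ≤ lam i := fun i =>
    hmono i iN (by simp [hiN, Fin.le_def]; omega)
  have hZN : lam iN * (∑ i, Complex.normSq (Z i)) ≤ s := by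
    rw [Finset.mul_sum]
    refine le_trans (Finset.sum_le_sum fun i _ => ?_) hTs
    exact mul_le_mul_of_nonneg_right (hNle i) (Complex.normSq_nonneg _)
  have hZs : (∑ i, Complex.normSq (Z i)) / s ≤ (lam iN)⁻¹ :=
    stmt4_aux _ _ _ (hpos iN) hs_pos hZN
  -- all i ≠ iN : (lam i)⁻¹ ≤ C, hence C⁻¹ ≤ lam i
  have hsum_inv : (∑ i, (lam i)⁻¹) ≤ C + (lam iN)⁻¹ := by linarith
  have hinvC : ∀ i : Fin n, i ≠ iN → C⁻¹ ≤ lam i := by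
    intro i hi
    have h1 : (lam i)⁻¹ + (lam iN)⁻¹ ≤ ∑ j, (lam j)⁻¹ := by
      rw [← Finset.add_sum_erase _ _ (Finset.mem_univ iN)]
      have : (lam i)⁻¹ ≤ ∑ j ∈ Finset.univ.erase iN, (lam j)⁻¹ :=
        Finset.single_le_sum (fun j _ => (inv_pos.2 (hpos j)).le)
          (Finset.mem_erase.2 ⟨hi, Finset.mem_univ i⟩)
      linarith
    have h2 : (lam i)⁻¹ ≤ C := by linarith
    have := inv_anti₀ (inv_pos.2 (hpos i)) h2
    rwa [inv_inv] at this
  -- lam i0 * lam iN ≤ C^(n-1) * s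
  have hi0N : i0 ≠ iN := by simp [hi0, hiN, Fin.ext_iff]; omega
  have hprod : lam i0 * lam iN * (C⁻¹) ^ (n - 2) ≤ C * s := by
    have hcard : ((Finset.univ.erase i0).erase iN).card = n - 2 := by
      rw [Finset.card_erase_of_mem, Finset.card_erase_of_mem] <;>
        simp [Finset.mem_erase, hi0N.symm]
      omega
    have hsplit : ∏ i, lam i =
        lam i0 * (lam iN * ∏ i ∈ (Finset.univ.erase i0).erase iN, lam i) := by
      rw [Finset.mul_prod_erase _ _ (Finset.mem_erase.2 ⟨hi0N.symm, Finset.mem_univ iN⟩),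
        Finset.mul_prod_erase _ _ (Finset.mem_univ i0)]
    have hlow : (C⁻¹) ^ (n - 2) ≤ ∏ i ∈ (Finset.univ.erase i0).erase iN, lam i := by
      rw [← hcard, ← Finset.prod_const]
      refine Finset.prod_le_prod (fun i _ => (inv_pos.2 hC0).le) fun i hi => ?_
      exact hinvC i (Finset.mem_erase.1 hi).1
    calc lam i0 * lam iN * (C⁻¹) ^ (n - 2)
        ≤ lam i0 * lam iN * ∏ i ∈ (Finset.univ.erase i0).erase iN, lam i := by
          exact mul_le_mul_of_nonneg_left hlow
            (mul_nonneg (hpos i0).le (hpos iN).le)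
      _ = ∏ i, lam i := by rw [hsplit]; ring
      _ ≤ C * s := hb
  have hpow : (C⁻¹) ^ (n-2) = (C ^ (n-2))⁻¹ := by rw [inv_pow]
  have hprod' : lam i0 * lam iN ≤ C ^ (n-1) * s := by
    have h1 : lam i0 * lam iN ≤ C * s * C ^ (n-2) := by
      rw [hpow] at hprod
      have hCp : (0:ℝ) < C ^ (n-2) := pow_pos hC0 _
      calc lam i0 * lam iN = lam i0 * lam iN * (C ^ (n-2))⁻¹ * C ^ (n-2) := by
            field_simp
        _ ≤ C * s * C ^ (n-2) := mul_le_mul_of_nonneg_right hprod hCp.le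
    calc lam i0 * lam iN ≤ C * s * C ^ (n-2) := h1
      _ = C ^ (n-1) * s := by
          rw [show n - 1 = (n-2) + 1 by omega, pow_succ]; ring
  -- (lam iN)⁻¹ ≤ C + |Z_N|²/s
  have hN : (lam iN)⁻¹ - Complex.normSq (Z iN) / s ≤ C := by
    have ha' : ∑ i, ((lam i)⁻¹ - Complex.normSq (Z i) / s) ≤ C := by
      rw [Finset.sum_sub_distrib, ← Finset.sum_div]; exact ha
    refine le_trans (Finset.single_le_sum (f := fun i => (lam i)⁻¹ - Complex.normSq (Z i) / s)
      (fun i _ => ?_) (Finset.mem_univ iN)) ha'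
    have := stmt4_aux (Complex.normSq (Z i)) (lam i) s (hpos i) hs_pos (hterm i)
    linarith
  -- finish
  have hqN : Complex.normSq (Z iN) ≤ C := by
    refine le_trans ?_ hc
    exact Finset.single_le_sum (fun j _ => Complex.normSq_nonneg _) (Finset.mem_univ iN)
  have hsT1 : s ≤ T + 1 := by rw [hs]; linarith
  have hKpos : (0:ℝ) < C ^ (n-1) := pow_pos hC0 _
  have hCn : C ^ (n-1) * C = C ^ n := by
    rw [← pow_succ]; congr 1; omega
  have hfin : lam i0 ≤ C ^ (n-1) * s * (C + Complex.normSq (Z iN) / s) := by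
    have h1 : lam i0 = lam i0 * lam iN * (lam iN)⁻¹ :=
      (mul_inv_cancel_right₀ (hpos iN).ne' _).symm
    have h2 : lam i0 * lam iN * (lam iN)⁻¹ ≤ C ^ (n-1) * s * (lam iN)⁻¹ :=
      mul_le_mul_of_nonneg_right hprod' (inv_pos.2 (hpos iN)).le
    have h3 : C ^ (n-1) * s * (lam iN)⁻¹ ≤ C ^ (n-1) * s * (C + Complex.normSq (Z iN) / s) := by
      refine mul_le_mul_of_nonneg_left ?_ (mul_nonneg hKpos.le hs_pos.le)
      linarith
    linarith
  have hss : C ^ (n-1) * s * (Complex.normSq (Z iN) / s) = C ^ (n-1) * Complex.normSq (Z iN) := by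
    rw [mul_div_assoc']
    field_simp
  have hCn1 : (1:ℝ) ≤ C ^ n := one_le_pow₀ hC
  nlinarith [mul_le_mul_of_nonneg_left hsT1 (mul_nonneg hKpos.le hC0.le),
    mul_le_mul_of_nonneg_left hqN hKpos.le, mul_nonneg (sub_nonneg.2 hCn1) hT0]
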